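/- Let s_k = (ε^{(k)}, t_k) and u_k = (1, t_k) in the hyperoctahedral group B_n, where t_k = (k,k−1,…,1) ∈ S_n and ε^{(k)} is the sign vector that is −1 in coordinate k and +1 elsewhere. Then every g ∈ B_n is uniquely expressible as g = s₁^{d₁}⋯s_n^{d_n} u_n^{c_n}⋯u₂^{c₂} with 0 ≤ d_k < 2 and 0 ≤ c_k < k; moreover for such g, maj_A(g) = maj(t_n^{c_n}⋯t₂^{c₂}) and Neg(g) = {i : d_i = 1}. -/

import Mathlib

/-- The hyperoctahedral group `Bₙ = {±1}ⁿ ⋊ Sₙ` of signed permutations; an element is a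
pair `(w, ε)` of a permutation `w` and a sign vector, encoded with `ε i = 1` in `ZMod 2`
meaning coordinate `i` is negative. Multiplication is
`(ε,u)(ε',v) = (ε·(u·ε'), uv)` with `(u·ε')_i = ε'_{u⁻¹(i)}` (written additively). -/
def SignedPerm (n : ℕ) : Type := Equiv.Perm (Fin n) × (Fin n → ZMod 2)

namespace SignedPerm

variable {n : ℕ}

instance : Mul (SignedPerm n) := ⟨fun a b => (a.1 * b.1, a.2 + b.2 ∘ ⇑(a.1⁻¹))⟩
instance : One (SignedPerm n) := ⟨(1, 0)⟩
instance : Inv (SignedPerm n) := ⟨fun a => (a.1⁻¹, -(a.2 ∘ ⇑a.1))⟩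

theorem mul_def (a b : SignedPerm n) : a * b = (a.1 * b.1, a.2 + b.2 ∘ ⇑(a.1⁻¹)) := rfl
theorem one_def : (1 : SignedPerm n) = ((1 : Equiv.Perm (Fin n)), 0) := rfl
theorem inv_def (a : SignedPerm n) : a⁻¹ = (a.1⁻¹, -(a.2 ∘ ⇑a.1)) := rfl

instance : Group (SignedPerm n) where
  mul_assoc a b c := by
    rw [mul_def, mul_def, mul_def, mul_def]
    refine Prod.ext (mul_assoc _ _ _) ?_
    funext i
    simp [Function.comp, Equiv.Perm.mul_apply, add_assoc]
  one_mul a := by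
    rw [mul_def, one_def]
    refine Prod.ext (one_mul _) ?_
    funext i
    simp
  mul_one a := by
    rw [mul_def, one_def]
    refine Prod.ext (mul_one _) ?_
    funext i
    simp
  inv_mul_cancel a := by
    rw [mul_def, inv_def, one_def]
    refine Prod.ext (inv_mul_cancel _) ?_
    funext i
    simp [Function.comp, CharTwo.add_self_eq_zero]

/-- The signed letter (as an integer in `{±1,…,±n}`) at (0-indexed) position `i` of the
one-line notation: the value `w(i)+1` (1-indexed), negated when its sign is `-1`. -/
def letter (g : SignedPerm n) (i : Fin n) : ℤ :=
  (if g.2 (g.1 i) = 1 then -1 else 1) * (((g.1 i : ℕ) : ℤ) + 1)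

/-- The A-major index: the sum of the A-descents, the positions `i ∈ {1,…,n-1}`
(1-indexed) where `letter i >_A letter (i+1)` in the natural integer order (the
A-descent at `0`, present when the first letter is negative, contributes `0`). -/
def majA (g : SignedPerm n) : ℕ :=
  ∑ i : Fin n, if h : i.1 + 1 < n then
    (if letter g ⟨i.1 + 1, h⟩ < letter g i then i.1 + 1 else 0) else 0

/-- The key of a signed letter for the B-order `0 <_B 1 <_B ⋯ <_B n <_B -n <_B ⋯ <_B -1`. -/
def bKey (n : ℕ) (a : ℤ) : ℤ := if 0 ≤ a then a else 2 * (n : ℤ) + 1 + a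

/-- The B-major index: the sum of the B-descents, the positions `i ∈ {1,…,n-1}`
(1-indexed) where `letter i >_B letter (i+1)`, together with `n` when the last letter
is negative. -/
def majB (g : SignedPerm n) : ℕ :=
  ∑ i : Fin n, if h : i.1 + 1 < n then
    (if bKey n (letter g ⟨i.1 + 1, h⟩) < bKey n (letter g i) then i.1 + 1 else 0)
  else (if letter g i < 0 then n else 0)

/-- The negative set `Neg(ε,w) = {i : εᵢ = -1}`. -/
def negSet (g : SignedPerm n) : Finset (Fin n) := Finset.univ.filter fun i => g.2 i = 1

/-- The number of negative letters. -/
def nneg (g : SignedPerm n) : ℕ := (negSet g).card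

end SignedPerm

/-- The (ordinary) major index of a permutation. -/
def pmaj {n : ℕ} (w : Equiv.Perm (Fin n)) : ℕ :=
  ∑ i : Fin n, if h : i.1 + 1 < n then
    (if w ⟨i.1 + 1, h⟩ < w i then i.1 + 1 else 0) else 0

/-- `s_{i+1} = (ε^{(i+1)}, t_{i+1})`: the signed version of the cycle
`t_{i+1} = (i+1, i, …, 1)`, with sign vector negative exactly in coordinate `i+1`. -/
def sgen {n : ℕ} (i : Fin n) : SignedPerm n :=
  ((Fin.cycleRange i)⁻¹, fun j => if j = i then 1 else 0)

/-- `u_{i+1} = (𝟏, t_{i+1})`: the unsigned version of `t_{i+1}`. -/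
def ugen {n : ℕ} (i : Fin n) : SignedPerm n := ((Fin.cycleRange i)⁻¹, 0)

section Stmt19Aux

open Equiv List

variable {n : ℕ}

theorem tFix {i j : Fin n} (h : i < j) : (Fin.cycleRange i)⁻¹ j = j := by
  cases n with
  | zero => exact j.elim0
  | succ m => rw [Equiv.Perm.inv_eq_iff_eq, Fin.cycleRange_of_gt h]

theorem tPowFix {i j : Fin n} (h : i < j) (e : ℕ) : ((Fin.cycleRange i)⁻¹ ^ e) j = j := by
  induction e with
  | zero => rfl
  | succ e ih => rw [pow_succ, Equiv.Perm.mul_apply, tFix h, ih]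

theorem tSub {i : Fin n} {m : ℕ} (hm : m ≤ i.1) (h0 : 0 < m) :
    (Fin.cycleRange i)⁻¹ ⟨m, lt_of_le_of_lt hm i.isLt⟩
      = ⟨m - 1, lt_of_le_of_lt (Nat.sub_le m 1) (lt_of_le_of_lt hm i.isLt)⟩ := by
  cases n with
  | zero => exact i.elim0
  | succ k =>
    rw [Equiv.Perm.inv_eq_iff_eq]
    have hlt : (⟨m - 1, lt_of_le_of_lt (Nat.sub_le m 1) (lt_of_le_of_lt hm i.isLt)⟩ : Fin (k+1)) < i := by
      simp only [Fin.lt_def]; omega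
    apply Fin.ext
    rw [Fin.coe_cycleRange_of_lt hlt]
    simp; omega

theorem tZero (i : Fin n) (h0 : 0 < n) : (Fin.cycleRange i)⁻¹ ⟨0, h0⟩ = i := by
  cases n with
  | zero => exact i.elim0
  | succ k =>
    rw [Equiv.Perm.inv_eq_iff_eq, Fin.cycleRange_self]
    rfl

theorem tPowVal {i : Fin n} {m : ℕ} (hm : m ≤ i.1) {e : ℕ} (he : e ≤ m) :
    ((Fin.cycleRange i)⁻¹ ^ e) ⟨m, lt_of_le_of_lt hm i.isLt⟩
      = ⟨m - e, lt_of_le_of_lt (Nat.sub_le m e) (lt_of_le_of_lt hm i.isLt)⟩ := by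
  induction e with
  | zero => simp
  | succ e ih =>
    rw [pow_succ', Equiv.Perm.mul_apply, ih (by omega)]
    have h1 : m - e ≤ i.1 := by omega
    have h2 : 0 < m - e := by omega
    have := tSub h1 h2
    convert this using 2 <;> omega

end Stmt19Aux

namespace Stmt19Aux2

open List SignedPerm

variable {n : ℕ}

theorem fst_prod (l : List (SignedPerm n)) : l.prod.1 = (l.map Prod.fst).prod := by
  induction l with
  | nil => rfl
  | cons a t ih => exact congrArg (a.1 * ·) ih

theorem snd_prod_zero (l : List (SignedPerm n)) (h : ∀ a ∈ l, a.2 = 0) : l.prod.2 = 0 := by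
  induction l with
  | nil => rfl
  | cons a t ih =>
    rw [List.prod_cons, SignedPerm.mul_def]
    have ha := h a List.mem_cons_self
    have ht := ih fun b hb => h b (List.mem_cons_of_mem a hb)
    funext i
    simp [ha, ht]

theorem ugen_pow (i : Fin n) (e : ℕ) :
    (ugen i) ^ e = (((Fin.cycleRange i)⁻¹ : Equiv.Perm (Fin n)) ^ e, (0 : Fin n → ZMod 2)) := by
  induction e with
  | zero => rfl
  | succ e ih =>
    rw [pow_succ, pow_succ, SignedPerm.mul_def, ih]
    refine Prod.ext rfl ?_
    funext j
    simp [ugen]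

/-- The permutation part of the `u`-product. -/
def Qp (c : ∀ i : Fin n, Fin (i.1 + 1)) : Equiv.Perm (Fin n) :=
  (List.ofFn fun j : Fin n =>
    ((Fin.cycleRange j.rev)⁻¹ : Equiv.Perm (Fin n)) ^ ((c j.rev : ℕ))).prod

theorem U_eq (c : ∀ i : Fin n, Fin (i.1 + 1)) :
    (List.ofFn fun j : Fin n => ugen j.rev ^ ((c j.rev : ℕ))).prod
      = (Qp c, (0 : Fin n → ZMod 2)) := by
  refine Prod.ext ?_ ?_
  · rw [fst_prod]
    have : (Prod.fst ∘ fun j : Fin n => ugen j.rev ^ ((c j.rev : ℕ)))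
        = fun j : Fin n => ((Fin.cycleRange j.rev)⁻¹ : Equiv.Perm (Fin n)) ^ ((c j.rev : ℕ)) := by
      funext j
      simp [Function.comp, ugen_pow]
    exact congrArg List.prod (List.map_ofFn.trans (congrArg List.ofFn this))
  · refine snd_prod_zero _ fun a ha => ?_
    rw [List.mem_ofFn] at ha
    obtain ⟨j, rfl⟩ := ha
    show (ugen j.rev ^ ((c j.rev : ℕ))).2 = 0
    rw [ugen_pow]

end Stmt19Aux2

namespace Stmt19Aux3

open List SignedPerm

variable {n : ℕ}

/-- The `s`-factors list. -/
def Sl (d : Fin n → Fin 2) : List (SignedPerm n) :=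
  List.ofFn fun i : Fin n => sgen i ^ ((d i : ℕ))

/-- The signed value read off through a permutation `P` with signs `d`. -/
def hfun (d : Fin n → Fin 2) (P : Equiv.Perm (Fin n)) (j : Fin n) : ℤ :=
  (if ((d (P j) : ℕ) : ZMod 2) = 1 then -1 else 1) * ((((P j : Fin n) : ℕ) : ℤ) + 1)

theorem lt_of_fix {P : Equiv.Perm (Fin n)} {k : ℕ}
    (hfix : ∀ j : Fin n, k ≤ j.1 → P j = j) {j : Fin n} (hj : j.1 < k) : (P j).1 < k := by
  by_contra hc
  push_neg at hc
  have h3 : P j = j := P.injective (hfix (P j) hc)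
  rw [h3] at hc
  omega

theorem hfun_bound {d : Fin n → Fin 2} {P : Equiv.Perm (Fin n)} {k : ℕ} {j : Fin n}
    (h : (P j).1 < k) : -(k:ℤ) ≤ hfun d P j ∧ hfun d P j ≤ k := by
  unfold hfun
  split <;> simp only [neg_one_mul, one_mul] <;> constructor <;> push_cast <;> omega

theorem S_main (d : Fin n → Fin 2) (k : ℕ) (hk : k ≤ n) :
    (∀ j : Fin n, k ≤ j.1 → ((Sl d).take k).prod.1 j = j) ∧
    (((Sl d).take k).prod.2
      = fun i : Fin n => if i.1 < k then ((d i : ℕ) : ZMod 2) else 0) ∧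
    (∀ j1 j2 : Fin n, j1 < j2 → j2.1 < k →
      hfun d ((Sl d).take k).prod.1 j1 < hfun d ((Sl d).take k).prod.1 j2) := by
  induction k with
  | zero =>
    refine ⟨fun j _ => rfl, ?_, fun j1 j2 _ h => absurd h (Nat.not_lt_zero _)⟩
    funext i
    simp [SignedPerm.one_def]
  | succ k ih =>
    obtain ⟨h1, h2, h3⟩ := ih (by omega)
    have hkn : k < n := hk
    have hlen : k < (Sl d).length := by rw [Sl, List.length_ofFn]; exact hkn
    have hget : (Sl d)[(k : ℕ)]'hlen = sgen ⟨k, hkn⟩ ^ ((d ⟨k, hkn⟩ : ℕ)) := by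
      simp [Sl, List.getElem_ofFn]
    have hstep := List.prod_take_succ _ k hlen
    rw [hget] at hstep
    have hd2 : (d ⟨k, hkn⟩ : ℕ) = 0 ∨ (d ⟨k, hkn⟩ : ℕ) = 1 := by
      have := (d ⟨k, hkn⟩).isLt; omega
    rcases hd2 with hd | hd
    · -- trivial factor
      rw [hd, pow_zero, mul_one] at hstep
      rw [hstep]
      refine ⟨fun j hj => h1 j (by omega), ?_, ?_⟩
      · rw [h2]
        funext i
        by_cases hik : i.1 < k
        · rw [if_pos hik, if_pos (by omega)]
        by_cases hik1 : i.1 < k + 1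
        · have hiκ : i = ⟨k, hkn⟩ := Fin.ext (show i.1 = k by omega)
          rw [if_neg hik, if_pos hik1, hiκ, hd, Nat.cast_zero]
        · rw [if_neg hik, if_neg hik1]
      · intro j1 j2 hlt hj2
        rcases Nat.lt_succ_iff_lt_or_eq.mp hj2 with hc | hc
        · exact h3 j1 j2 hlt hc
        · have hub : hfun d ((Sl d).take k).prod.1 j1 ≤ (k : ℤ) :=
            (hfun_bound (lt_of_fix h1 (by omega : j1.1 < k))).2
          have hPj2 : ((Sl d).take k).prod.1 j2 = j2 := h1 j2 (by omega)
          have hv : hfun d ((Sl d).take k).prod.1 j2 = (k : ℤ) + 1 := by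
            unfold hfun
            rw [hPj2, show j2 = ⟨k, hkn⟩ from Fin.ext hc, hd, Nat.cast_zero,
              if_neg (by decide), one_mul]
          rw [hv]
          omega
    · -- sign factor
      rw [hd, pow_one] at hstep
      have hfst : ((Sl d).take (k+1)).prod.1
          = ((Sl d).take k).prod.1 * (Fin.cycleRange (⟨k, hkn⟩ : Fin n))⁻¹ := by
        rw [hstep]; rfl
      have hsnd : ((Sl d).take (k+1)).prod.2
          = ((Sl d).take k).prod.2
            + (fun j : Fin n => if j = ⟨k, hkn⟩ then (1:ZMod 2) else 0)
                ∘ ⇑(((Sl d).take k).prod.1⁻¹) := by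
        rw [hstep]; rfl
      refine ⟨?_, ?_, ?_⟩
      · intro j hj
        rw [hfst, Equiv.Perm.mul_apply, tFix (show (⟨k, hkn⟩ : Fin n) < j by
          rw [Fin.lt_def]; exact hj), h1 j (by omega)]
      · rw [hsnd, h2]
        funext i
        simp only [Pi.add_apply, Function.comp_apply]
        have hκfix : ((Sl d).take k).prod.1 ⟨k, hkn⟩ = ⟨k, hkn⟩ := h1 _ le_rfl
        have hinv : (((Sl d).take k).prod.1⁻¹ i = ⟨k, hkn⟩) ↔ i = ⟨k, hkn⟩ := by
          rw [Equiv.Perm.inv_eq_iff_eq, hκfix]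
        by_cases hik : i.1 < k
        · rw [if_pos hik, if_pos (by omega : i.1 < k + 1),
            if_neg (fun hc => by rw [hinv] at hc; rw [hc] at hik; simp at hik), add_zero]
        by_cases hik1 : i.1 < k + 1
        · have hiκ : i = ⟨k, hkn⟩ := Fin.ext (show i.1 = k by omega)
          rw [if_neg hik, if_pos hik1, if_pos (hinv.mpr hiκ), zero_add, hiκ, hd, Nat.cast_one]
        · rw [if_neg hik, if_neg hik1,
            if_neg (fun hc => by rw [hinv] at hc; rw [hc] at hik1; simp at hik1), add_zero]
      · intro j1 j2 hlt hj2
        rw [hfst]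
        have happ : ∀ j : Fin n,
            hfun d (((Sl d).take k).prod.1 * (Fin.cycleRange (⟨k, hkn⟩ : Fin n))⁻¹) j
              = hfun d ((Sl d).take k).prod.1 ((Fin.cycleRange (⟨k, hkn⟩ : Fin n))⁻¹ j) :=
          fun _ => rfl
        rw [happ, happ]
        have hj2k : j2.1 ≤ k := by omega
        have hj2pos : 0 < j2.1 := by have := Fin.lt_def.mp hlt; omega
        have ht2 : (Fin.cycleRange (⟨k, hkn⟩ : Fin n))⁻¹ j2
            = ⟨j2.1 - 1, by omega⟩ := by
          have ht := tSub (i := (⟨k, hkn⟩ : Fin n)) (m := j2.1) hj2k hj2pos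
          rwa [show (⟨j2.1, _⟩ : Fin n) = j2 from Fin.ext rfl] at ht
        by_cases hj1 : j1.1 = 0
        · rw [show j1 = ⟨0, by omega⟩ from Fin.ext hj1, tZero _ (by omega)]
          have hκv : hfun d ((Sl d).take k).prod.1 ⟨k, hkn⟩ = -((k:ℤ)+1) := by
            unfold hfun
            rw [h1 _ le_rfl, hd, Nat.cast_one, if_pos rfl, neg_one_mul]
          rw [hκv, ht2]
          refine lt_of_lt_of_le (show -((k:ℤ)+1) < -(k:ℤ) by omega) (hfun_bound ?_).1
          exact lt_of_fix h1 (by show j2.1 - 1 < k; omega)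
        · have hj1k : j1.1 ≤ k := by omega
          have hj1pos : 0 < j1.1 := by omega
          have ht1 : (Fin.cycleRange (⟨k, hkn⟩ : Fin n))⁻¹ j1
              = ⟨j1.1 - 1, by omega⟩ := by
            have ht := tSub (i := (⟨k, hkn⟩ : Fin n)) (m := j1.1) hj1k hj1pos
            rwa [show (⟨j1.1, _⟩ : Fin n) = j1 from Fin.ext rfl] at ht
          rw [ht1, ht2]
          refine h3 _ _ ?_ ?_
          · have := Fin.lt_def.mp hlt
            exact Fin.mk_lt_mk.mpr (by omega)
          · show j2.1 - 1 < k
            omega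
      
end Stmt19Aux3

namespace Stmt19Aux4

open List SignedPerm Stmt19Aux2 Stmt19Aux3

variable {n : ℕ}

/-- The `u`-factors permutation list. -/
def Ql (c : ∀ i : Fin n, Fin (i.1 + 1)) : List (Equiv.Perm (Fin n)) :=
  List.ofFn fun j : Fin n =>
    ((Fin.cycleRange j.rev)⁻¹ : Equiv.Perm (Fin n)) ^ ((c j.rev : ℕ))

theorem Qp_eq (c : ∀ i : Fin n, Fin (i.1 + 1)) : Qp c = (Ql c).prod := rfl

theorem Ql_cons (c : ∀ i : Fin n, Fin (i.1 + 1)) {s : ℕ} (hs : s + 1 ≤ n) :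
    (Ql c).drop (n - (s+1))
      = (((Fin.cycleRange (⟨s, hs⟩ : Fin n))⁻¹ : Equiv.Perm (Fin n)) ^ ((c ⟨s, hs⟩ : ℕ)))
          :: (Ql c).drop (n - s) := by
  have hlt : n - (s+1) < (Ql c).length := by rw [Ql, List.length_ofFn]; omega
  rw [List.drop_eq_getElem_cons hlt]
  congr 1
  · simp only [Ql, List.getElem_ofFn]
    have hrev : (Fin.rev (⟨n - (s+1), by omega⟩ : Fin n)) = ⟨s, hs⟩ := by
      apply Fin.ext
      rw [Fin.val_rev]
      show n - (n - (s+1) + 1) = s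
      omega
    rw [hrev]
  · congr 1
    omega

theorem U_fix (c : ∀ i : Fin n, Fin (i.1 + 1)) :
    ∀ s, s ≤ n → ∀ j : Fin n, s ≤ j.1 → ((Ql c).drop (n - s)).prod j = j := by
  intro s
  induction s with
  | zero =>
    intro _ j _
    rw [Nat.sub_zero, List.drop_eq_nil_of_le (by rw [Ql, List.length_ofFn])]
    rfl
  | succ s ih =>
    intro hs j hj
    rw [Ql_cons c hs, List.prod_cons, Equiv.Perm.mul_apply, ih (by omega) j (by omega),
      tPowFix (show (⟨s, hs⟩ : Fin n) < j from hj)]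

theorem U_inj_aux (c c' : ∀ i : Fin n, Fin (i.1 + 1)) :
    ∀ s, s ≤ n → ((Ql c).drop (n - s)).prod = ((Ql c').drop (n - s)).prod →
      ∀ j : Fin n, j.1 < s → c j = c' j := by
  intro s
  induction s with
  | zero => intro _ _ j hj; omega
  | succ s ih =>
    intro hs h j hj
    have hcs : (c ⟨s, hs⟩ : ℕ) ≤ s := Nat.lt_succ_iff.mp (c ⟨s, hs⟩).isLt
    have hcs' : (c' ⟨s, hs⟩ : ℕ) ≤ s := Nat.lt_succ_iff.mp (c' ⟨s, hs⟩).isLt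
    have lhs_eq : ∀ (b : ∀ i : Fin n, Fin (i.1 + 1)),
        ((Ql b).drop (n - (s+1))).prod ⟨s, hs⟩
          = ⟨s - (b ⟨s, hs⟩ : ℕ), by omega⟩ := by
      intro b
      rw [Ql_cons b hs, List.prod_cons, Equiv.Perm.mul_apply,
        U_fix b s (by omega) _ le_rfl]
      exact tPowVal (i := (⟨s, hs⟩ : Fin n)) (m := s) le_rfl
        (Nat.lt_succ_iff.mp (b ⟨s, hs⟩).isLt)
    have happ : ((Ql c).drop (n - (s+1))).prod ⟨s, hs⟩
        = ((Ql c').drop (n - (s+1))).prod ⟨s, hs⟩ := by rw [h]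
    rw [lhs_eq c, lhs_eq c'] at happ
    have hval : s - (c ⟨s, hs⟩ : ℕ) = s - (c' ⟨s, hs⟩ : ℕ) := by
      exact congrArg Fin.val happ
    have hcc : c ⟨s, hs⟩ = c' ⟨s, hs⟩ := by
      apply Fin.ext
      omega
    -- cancel heads
    have htails : ((Ql c).drop (n - s)).prod = ((Ql c').drop (n - s)).prod := by
      have h2 := h
      rw [Ql_cons c hs, Ql_cons c' hs, List.prod_cons, List.prod_cons, hcc] at h2
      exact mul_left_cancel h2
    rcases Nat.lt_succ_iff_lt_or_eq.mp hj with hc | hc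
    · exact ih (by omega) htails j hc
    · have : j = ⟨s, hs⟩ := Fin.ext hc
      rw [this, hcc]

theorem U_inj {c c' : ∀ i : Fin n, Fin (i.1 + 1)} (h : Qp c = Qp c') : c = c' := by
  funext j
  refine U_inj_aux c c' n le_rfl ?_ j j.isLt
  rw [Nat.sub_self, List.drop_zero, List.drop_zero, ← Qp_eq, ← Qp_eq, h]

theorem take_all (d : Fin n → Fin 2) : (Sl d).take n = Sl d := by
  apply List.take_of_length_le
  rw [Sl, List.length_ofFn]

theorem S_snd (d : Fin n → Fin 2) :
    (Sl d).prod.2 = fun i : Fin n => ((d i : ℕ) : ZMod 2) := by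
  have h := (S_main d n le_rfl).2.1
  rw [take_all] at h
  rw [h]
  funext i
  rw [if_pos i.isLt]

theorem S_mono (d : Fin n → Fin 2) : StrictMono (hfun d (Sl d).prod.1) := by
  intro a b hab
  have h := (S_main d n le_rfl).2.2 a b hab b.isLt
  rwa [take_all] at h

/-- The encoding map. -/
def Enc (dc : (Fin n → Fin 2) × (∀ i : Fin n, Fin (i.1 + 1))) : SignedPerm n :=
  ((Sl dc.1).prod.1 * Qp dc.2, fun i : Fin n => ((dc.1 i : ℕ) : ZMod 2))

theorem enc_eq (dc : (Fin n → Fin 2) × (∀ i : Fin n, Fin (i.1 + 1))) :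
    (List.ofFn fun i : Fin n => sgen i ^ ((dc.1 i : ℕ))).prod *
      (List.ofFn fun j : Fin n => ugen j.rev ^ ((dc.2 j.rev : ℕ))).prod = Enc dc := by
  rw [SignedPerm.mul_def, U_eq]
  refine Prod.ext rfl ?_
  funext i
  show (Sl dc.1).prod.2 i + (0 : Fin n → ZMod 2) ((((Sl dc.1).prod.1)⁻¹) i)
    = ((dc.1 i : ℕ) : ZMod 2)
  rw [congrFun (S_snd dc.1) i]
  simp

theorem fin2_cast_inj (x y : Fin 2) (h : ((x : ℕ) : ZMod 2) = ((y : ℕ) : ZMod 2)) : x = y := by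
  apply Fin.ext
  have hx := x.isLt
  have hy := y.isLt
  by_contra hne
  have hcc : ((x:ℕ) = 0 ∧ (y:ℕ) = 1) ∨ ((x:ℕ) = 1 ∧ (y:ℕ) = 0) := by omega
  rcases hcc with ⟨h1, h2⟩ | ⟨h1, h2⟩ <;> rw [h1, h2] at h <;>
    rw [Nat.cast_zero, Nat.cast_one] at h <;> exact absurd h (by decide)

theorem enc_inj : Function.Injective (Enc (n := n)) := by
  intro a b h
  have hsnd := congrArg Prod.snd h
  have hd : a.1 = b.1 := funext fun i => fin2_cast_inj _ _ (congrFun hsnd i)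
  have hfst := congrArg Prod.fst h
  simp only [Enc] at hfst
  rw [hd] at hfst
  have hq : Qp a.2 = Qp b.2 := mul_left_cancel hfst
  exact Prod.ext hd (U_inj hq)

instance : Fintype (SignedPerm n) :=
  inferInstanceAs (Fintype (Equiv.Perm (Fin n) × (Fin n → ZMod 2)))

theorem prod_succ_eq_factorial (m : ℕ) : (∏ i ∈ Finset.range m, (i + 1)) = Nat.factorial m := by
  induction m with
  | zero => rfl
  | succ m ih => rw [Finset.prod_range_succ, ih, Nat.factorial_succ]; ring

theorem card_eq :
    Fintype.card ((Fin n → Fin 2) × (∀ i : Fin n, Fin (i.1 + 1)))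
      = Fintype.card (SignedPerm n) := by
  have h1 : Fintype.card (SignedPerm n)
      = Fintype.card (Equiv.Perm (Fin n)) * Fintype.card (Fin n → ZMod 2) :=
    Fintype.card_prod _ _
  rw [h1, Fintype.card_prod, Fintype.card_perm, Fintype.card_fin, Fintype.card_fun,
    Fintype.card_fin, Fintype.card_fun, Fintype.card_fin, ZMod.card, Fintype.card_pi]
  have h2 : (∏ i : Fin n, Fintype.card (Fin (i.1 + 1))) = Nat.factorial n := by
    have h3 : (∏ i : Fin n, Fintype.card (Fin (i.1 + 1))) = ∏ i : Fin n, (i.1 + 1) := by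
      apply Finset.prod_congr rfl
      intro i _
      rw [Fintype.card_fin]
    rw [h3, Fin.prod_univ_eq_prod_range (fun i => i + 1) n, prod_succ_eq_factorial]
  rw [h2]
  ring

theorem enc_bij : Function.Bijective (Enc (n := n)) :=
  (Fintype.bijective_iff_injective_and_card _).mpr ⟨enc_inj, card_eq⟩

end Stmt19Aux4

open SignedPerm in
/-- every `g ∈ Bₙ` is uniquely expressible as
`g = s₁^{d₁}⋯sₙ^{dₙ} uₙ^{cₙ}⋯u₂^{c₂}` with `0 ≤ d_k < 2`, `0 ≤ c_k < k` (the `u₁`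
factor is included with forced exponent `0`); moreover for such an expression,
`maj_A(g) = maj(tₙ^{cₙ}⋯t₂^{c₂})` and `Neg(g) = {i : dᵢ = 1}`. -/
theorem stmt19 (n : ℕ) (g : SignedPerm n) :
    (∃! dc : (Fin n → Fin 2) × (∀ i : Fin n, Fin (i.1 + 1)),
      g = (List.ofFn fun i : Fin n => sgen i ^ ((dc.1 i : ℕ))).prod *
            (List.ofFn fun j : Fin n => ugen j.rev ^ ((dc.2 j.rev : ℕ))).prod) ∧
    (∀ dc : (Fin n → Fin 2) × (∀ i : Fin n, Fin (i.1 + 1)),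
      g = (List.ofFn fun i : Fin n => sgen i ^ ((dc.1 i : ℕ))).prod *
            (List.ofFn fun j : Fin n => ugen j.rev ^ ((dc.2 j.rev : ℕ))).prod →
        majA g = pmaj ((List.ofFn fun j : Fin n =>
            ((Fin.cycleRange j.rev)⁻¹ : Equiv.Perm (Fin n)) ^ ((dc.2 j.rev : ℕ))).prod) ∧
        ∀ i : Fin n, (g.2 i = 1 ↔ (dc.1 i : ℕ) = 1)) := by
  
  constructor
  · obtain ⟨dc, hdc⟩ := Stmt19Aux4.enc_bij.2 g
    refine ⟨dc, ?_, ?_⟩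
    · show g = (List.ofFn fun i : Fin n => sgen i ^ ((dc.1 i : ℕ))).prod *
        (List.ofFn fun j : Fin n => ugen j.rev ^ ((dc.2 j.rev : ℕ))).prod
      rw [Stmt19Aux4.enc_eq dc]
      exact hdc.symm
    · intro y hy
      replace hy : g = (List.ofFn fun i : Fin n => sgen i ^ ((y.1 i : ℕ))).prod *
        (List.ofFn fun j : Fin n => ugen j.rev ^ ((y.2 j.rev : ℕ))).prod := hy
      apply Stmt19Aux4.enc_inj
      rw [← Stmt19Aux4.enc_eq y, ← hy, hdc]
  · intro dc h
    have hg : g = Stmt19Aux4.Enc dc := by rw [h, Stmt19Aux4.enc_eq]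
    constructor
    · rw [hg]
      show majA (Stmt19Aux4.Enc dc) = pmaj (Stmt19Aux2.Qp dc.2)
      unfold SignedPerm.majA pmaj
      apply Finset.sum_congr rfl
      intro i _
      by_cases hi : i.1 + 1 < n
      · rw [dif_pos hi, dif_pos hi]
        have key : ∀ a : Fin n, letter (Stmt19Aux4.Enc dc) a
            = Stmt19Aux3.hfun dc.1 (Stmt19Aux3.Sl dc.1).prod.1 (Stmt19Aux2.Qp dc.2 a) :=
          fun a => rfl
        rw [key, key, if_congr ((Stmt19Aux4.S_mono dc.1).lt_iff_lt) rfl rfl]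
      · rw [dif_neg hi, dif_neg hi]
    · intro i
      rw [hg]
      show ((dc.1 i : ℕ) : ZMod 2) = 1 ↔ (dc.1 i : ℕ) = 1
      constructor
      · intro h1
        by_contra hne
        have h0 : (dc.1 i : ℕ) = 0 := by have := (dc.1 i).isLt; omega
        rw [h0, Nat.cast_zero] at h1
        exact absurd h1 (by decide)
      · intro h1
        rw [h1, Nat.cast_one]
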